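/- Let b ≥ 2 be an integer and x = x₁x₂… an infinite word over {0, 1, …, b−1} which is not eventually periodic, and set ξ = Σ_{k≥1} x_k / b^k. If rep(x) = 1, then ξ is a Liouville number; and if 1 < rep(x) < ∞, then the irrationality exponent of ξ satisfies μ(ξ) ≥ rep(x) / (rep(x) − 1). -/

import Mathlib

open Filter

/-- `rc n x` : length of the shortest prefix of the infinite word `x` containing two
(possibly overlapping) occurrences of some word of length `n`.  Here `x k` is the
`(k+1)`-st letter of the word. -/
noncomputable def rc {A : Type*} (n : ℕ) (x : ℕ → A) : ℕ :=
  sInf {m | ∃ j, j + n < m ∧ ∀ t < n, x (j + t) = x (m - n + t)}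

/-- subword complexity: the number of distinct factors of length `n` of `x` -/
noncomputable def pc {A : Type*} (n : ℕ) (x : ℕ → A) : ℕ :=
  Set.ncard {w : Fin n → A | ∃ k, ∀ t : Fin n, w t = x (k + t.1)}

def IsSturmian {A : Type*} (x : ℕ → A) : Prop := ∀ n ≥ 1, pc n x = n + 1

def EventuallyPeriodic {A : Type*} (x : ℕ → A) : Prop :=
  ∃ p > 0, ∃ N, ∀ n ≥ N, x (n + p) = x n

/-- exponent of repetition: `liminf r(n,x)/n` -/
noncomputable def repExp {A : Type*} (x : ℕ → A) : EReal :=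
  Filter.atTop.liminf fun n => (((rc n x : ℝ) / (n : ℝ) : ℝ) : EReal)

/-- the irrationality exponent of a real number `ξ`, as an extended real: the supremum
of the real numbers `μ` such that `|ξ - p/q| < 1/q^μ` has infinitely many rational
solutions `p/q`.  A real number `ξ` is a Liouville number when `irrExp ξ = ⊤`. -/
noncomputable def irrExp (ξ : ℝ) : EReal :=
  sSup ((fun m : ℝ => (m : EReal)) ''
    {m : ℝ | {q : ℚ | |ξ - (q : ℝ)| < 1 / (q.den : ℝ) ^ m}.Infinite})

set_option maxHeartbeats 1000000

section aux
variable {b : ℕ} {x : ℕ → ℕ}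

noncomputable def Ttail (b : ℕ) (x : ℕ → ℕ) (j : ℕ) : ℝ :=
  ∑' i : ℕ, (x (j + i) : ℝ) / (b : ℝ) ^ (i + 1)


def Npre (b : ℕ) (x : ℕ → ℕ) (j : ℕ) : ℕ := ∑ k ∈ Finset.range j, x k * b ^ (j - 1 - k)

lemma hb1 (hb : 2 ≤ b) : (1 : ℝ) < (b : ℝ) := by exact_mod_cast hb.trans_lt' one_lt_two

lemma hbinv (hb : 2 ≤ b) : ((b:ℝ))⁻¹ < 1 := inv_lt_one_of_one_lt₀ (hb1 hb)

lemma digle (hdig : ∀ k, x k < b) (k : ℕ) : (x k : ℝ) ≤ (b:ℝ) - 1 := by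
  have : (x k : ℝ) + 1 ≤ (b:ℝ) := by exact_mod_cast hdig k
  linarith

lemma tail_summable (hb : 2 ≤ b) (hdig : ∀ k, x k < b) (j : ℕ) :
    Summable (fun i : ℕ => (x (j + i) : ℝ) / (b : ℝ) ^ (i + 1)) := by
  have hb0 : (0:ℝ) < b := by positivity
  refine Summable.of_nonneg_of_le (fun i => by positivity)
    (fun i => ?_)
    (summable_geometric_of_lt_one (by positivity) (hbinv hb))
  rw [inv_pow, div_le_iff₀ (by positivity), inv_mul_eq_div, le_div_iff₀ (by positivity)]
  have : (x (j+i) : ℝ) ≤ b := by exact_mod_cast (hdig (j+i)).le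
  calc (x (j+i) : ℝ) * (b:ℝ)^i ≤ (b:ℝ) * (b:ℝ)^i :=
        mul_le_mul_of_nonneg_right this (by positivity)
  _ = (b:ℝ) ^ (i+1) := by ring

lemma geom_val (hb : 2 ≤ b) : ∑' i : ℕ, ((b:ℝ) ^ (i+1))⁻¹ = ((b:ℝ) - 1)⁻¹ := by
  have hb0 : (0:ℝ) < b := by positivity
  have hbne : (b:ℝ) - 1 ≠ 0 := by nlinarith [hb1 hb]
  have : ∀ i : ℕ, ((b:ℝ) ^ (i+1))⁻¹ = (b:ℝ)⁻¹ * ((b:ℝ)⁻¹) ^ i := by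
    intro i; rw [pow_succ', mul_inv, inv_pow]
  rw [tsum_congr this, tsum_mul_left, tsum_geometric_of_lt_one (by positivity) (hbinv hb)]
  field_simp

lemma geom_summable (hb : 2 ≤ b) : Summable (fun i : ℕ => ((b:ℝ) ^ (i+1))⁻¹) := by
  have hb0 : (0:ℝ) < b := by positivity
  refine Summable.of_nonneg_of_le (fun i => by positivity)
    (fun i => ?_)
    (summable_geometric_of_lt_one (by positivity) (hbinv hb))
  rw [inv_pow]
  exact inv_anti₀ (by positivity) (pow_le_pow_right₀ (by linarith [hb1 hb]) (by omega))

lemma Ttail_nonneg (hdig : ∀ k, x k < b) (j : ℕ) : 0 ≤ Ttail b x j :=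
  tsum_nonneg (fun i => by positivity)

lemma Ttail_le_one (hb : 2 ≤ b) (hdig : ∀ k, x k < b) (j : ℕ) : Ttail b x j ≤ 1 := by
  have hb0 : (0:ℝ) < b := by positivity
  have hbne : (b:ℝ) - 1 ≠ 0 := by nlinarith [hb1 hb]
  have h := Summable.tsum_le_tsum (f := fun i : ℕ => (x (j + i) : ℝ) / (b : ℝ) ^ (i + 1))
    (g := fun i : ℕ => ((b:ℝ) - 1) * ((b:ℝ) ^ (i+1))⁻¹) (fun i => by
      simp only [div_eq_mul_inv]
      exact mul_le_mul_of_nonneg_right (digle hdig (j+i)) (by positivity))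
    (tail_summable hb hdig j) ((geom_summable hb).mul_left _)
  calc Ttail b x j ≤ ∑' i : ℕ, ((b:ℝ) - 1) * ((b:ℝ) ^ (i+1))⁻¹ := h
  _ = ((b:ℝ) - 1) * ((b:ℝ) - 1)⁻¹ := by rw [tsum_mul_left, geom_val hb]
  _ = 1 := mul_inv_cancel₀ hbne


lemma pow_mul_xi (hb : 2 ≤ b) (hdig : ∀ k, x k < b) (j : ℕ) :
    (b:ℝ) ^ j * Ttail b x 0 = (Npre b x j : ℝ) + Ttail b x j := by
  have hb0 : (0:ℝ) < b := by positivity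
  have hsum := tail_summable hb hdig 0
  have hsplit := Summable.sum_add_tsum_nat_add j hsum
  have h2 : ∑' i : ℕ, (x (0 + (i + j)) : ℝ) / (b : ℝ) ^ (i + j + 1)
      = ((b:ℝ)^j)⁻¹ * Ttail b x j := by
    rw [Ttail, ← tsum_mul_left]
    apply tsum_congr; intro i
    rw [zero_add, add_comm i j, inv_mul_eq_div, div_div, ← pow_add,
      show i + 1 + j = j + i + 1 by omega]
  rw [h2] at hsplit
  have h3 : (b:ℝ)^j * ∑ k ∈ Finset.range j, (x (0 + k) : ℝ) / (b : ℝ) ^ (k + 1)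
      = (Npre b x j : ℝ) := by
    rw [Finset.mul_sum, Npre, Nat.cast_sum]
    apply Finset.sum_congr rfl
    intro k hk
    have hk' : k < j := Finset.mem_range.mp hk
    have hpow : (b:ℝ)^j = (b:ℝ)^(j-1-k) * (b:ℝ)^(k+1) := by
      rw [← pow_add]; congr 1; omega
    rw [zero_add, hpow]
    push_cast
    field_simp
  rw [Ttail, ← hsplit, mul_add, h3]
  congr 1
  rw [← mul_assoc, mul_inv_cancel₀ (by positivity), one_mul]


lemma Ttail_rec (hb : 2 ≤ b) (hdig : ∀ k, x k < b) (j : ℕ) :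
    Ttail b x j = ((x j : ℝ) + Ttail b x (j+1)) / b := by
  have hb0 : (0:ℝ) < b := by positivity
  have hsum := tail_summable hb hdig j
  rw [Ttail, Summable.tsum_eq_zero_add hsum]
  have h2 : ∑' i : ℕ, (x (j + (i + 1)) : ℝ) / (b : ℝ) ^ (i + 1 + 1)
      = ((b:ℝ))⁻¹ * Ttail b x (j+1) := by
    rw [Ttail, ← tsum_mul_left]
    apply tsum_congr; intro i
    have : j + (i + 1) = j + 1 + i := by omega
    rw [this, inv_mul_eq_div, div_div, mul_comm, ← pow_succ']
  rw [h2, add_zero, pow_one, add_div]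
  ring

lemma not_tail_zero (hb : 2 ≤ b) (hdig : ∀ k, x k < b) (hnp : ¬ EventuallyPeriodic x)
    (c : ℕ) : Ttail b x c ≠ 0 := by
  intro h0
  have hzero : ∀ i, x (c + i) = 0 := by
    intro i
    have hle := Summable.le_tsum (tail_summable hb hdig c) i (fun i' _ => by positivity)
    rw [← Ttail, h0] at hle
    have : (x (c+i) : ℝ) / (b:ℝ)^(i+1) = 0 := le_antisymm hle (by positivity)
    have hb0 : (0:ℝ) < (b:ℝ)^(i+1) := by positivity
    field_simp at this
    exact_mod_cast this
  exact hnp ⟨1, one_pos, c, fun n hn => by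
    have h1 := hzero (n - c); have h2 := hzero (n + 1 - c)
    rw [show c + (n - c) = n by omega] at h1
    rw [show c + (n + 1 - c) = n + 1 by omega] at h2
    omega⟩


lemma not_tail_one (hb : 2 ≤ b) (hdig : ∀ k, x k < b) (hnp : ¬ EventuallyPeriodic x)
    (c : ℕ) : Ttail b x c ≠ 1 := by
  intro h1
  set g : ℕ → ℝ := fun i => ((b:ℝ)-1) / (b:ℝ)^(i+1) - (x (c + i) : ℝ) / (b:ℝ)^(i+1) with hg
  have hgs1 : Summable (fun i : ℕ => ((b:ℝ)-1) / (b:ℝ)^(i+1)) := by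
    simp only [div_eq_mul_inv]; exact (geom_summable hb).mul_left _
  have hgs : Summable g := hgs1.sub (tail_summable hb hdig c)
  have hgval : ∑' i, g i = 0 := by
    rw [Summable.tsum_sub hgs1 (tail_summable hb hdig c), ← Ttail, h1]
    have : ∑' i : ℕ, ((b:ℝ)-1) / (b:ℝ)^(i+1) = 1 := by
      simp only [div_eq_mul_inv]
      rw [tsum_mul_left, geom_val hb]
      exact mul_inv_cancel₀ (by nlinarith [hb1 hb])
    rw [this, sub_self]
  have hone : ∀ i, x (c + i) = b - 1 := by
    intro i
    have hle := Summable.le_tsum hgs i (fun i' _ => by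
      have := digle hdig (c + i')
      simp only [hg]
      have hb0 : (0:ℝ) < (b:ℝ)^(i'+1) := by positivity
      rw [sub_nonneg]
      gcongr)
    rw [hgval] at hle
    have hzero : g i = 0 := le_antisymm hle (by
      have := digle hdig (c + i)
      simp only [hg]
      have hb0 : (0:ℝ) < (b:ℝ)^(i+1) := by positivity
      rw [sub_nonneg]
      gcongr)
    simp only [hg, sub_eq_zero] at hzero
    have hb0 : (0:ℝ) < (b:ℝ)^(i+1) := by positivity
    rw [div_eq_div_iff hb0.ne' hb0.ne'] at hzero
    have hx : (x (c+i) : ℝ) = (b:ℝ) - 1 := by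
      have := mul_right_cancel₀ hb0.ne' hzero
      linarith
    have : ((x (c+i) : ℕ) : ℝ) = ((b - 1 : ℕ) : ℝ) := by
      rw [hx, Nat.cast_sub (by omega), Nat.cast_one]
    exact_mod_cast this
  exact hnp ⟨1, one_pos, c, fun n hn => by
    have h1 := hone (n - c); have h2 := hone (n + 1 - c)
    rw [show c + (n - c) = n by omega] at h1
    rw [show c + (n + 1 - c) = n + 1 by omega] at h2
    omega⟩


lemma Ttail_step (hb : 2 ≤ b) (hdig : ∀ k, x k < b) (hnp : ¬ EventuallyPeriodic x)
    {a a' : ℕ} (h : Ttail b x a = Ttail b x a') :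
    x a = x a' ∧ Ttail b x (a+1) = Ttail b x (a'+1) := by
  have hb0 : (0:ℝ) < b := by positivity
  have e : (x a : ℝ) + Ttail b x (a+1) = (x a' : ℝ) + Ttail b x (a'+1) := by
    have := h
    rw [Ttail_rec hb hdig a, Ttail_rec hb hdig a', div_eq_div_iff hb0.ne' hb0.ne'] at this
    exact mul_right_cancel₀ hb0.ne' this
  have key : ∀ u v : ℕ, x u < x v →
      ((x u : ℝ) + Ttail b x (u+1) = (x v : ℝ) + Ttail b x (v+1)) → False := by
    intro u v huv he
    have h1 : (x u : ℝ) + 1 ≤ (x v : ℝ) := by exact_mod_cast huv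
    have h2 := Ttail_le_one hb hdig (u+1)
    have h3 := Ttail_nonneg hdig (v+1)
    have h4 := Ttail_le_one hb hdig (v+1)
    have h5 := Ttail_nonneg hdig (u+1)
    have : Ttail b x (u+1) = 1 := by linarith
    exact not_tail_one hb hdig hnp (u+1) this
  rcases lt_trichotomy (x a) (x a') with hlt | heq | hlt
  · exact absurd e (by intro e'; exact key a a' hlt e')
  · refine ⟨heq, ?_⟩
    have : (x a : ℝ) = (x a' : ℝ) := by exact_mod_cast heq
    linarith
  · exact absurd e (by intro e'; exact key a' a hlt e'.symm)


lemma xi_irrational (hb : 2 ≤ b) (hdig : ∀ k, x k < b) (hnp : ¬ EventuallyPeriodic x)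
    (r : ℚ) : Ttail b x 0 ≠ (r : ℝ) := by
  intro hr
  set d := r.den with hdd
  have hd : 0 < d := r.pos
  set z : ℕ → ℤ := fun j => r.num * (b:ℤ)^j - (d:ℤ) * (Npre b x j : ℤ) with hz
  have hzval : ∀ j, (z j : ℝ) = (d:ℝ) * Ttail b x j := by
    intro j
    have h1 := pow_mul_xi (x := x) hb hdig j
    have hnum : (d:ℝ) * (r:ℝ) = (r.num : ℝ) := by
      rw [Rat.cast_def]
      field_simp [hdd]
      rw [hdd]; ring
    have : Ttail b x j = (b:ℝ)^j * (r:ℝ) - (Npre b x j : ℝ) := by rw [← hr]; linarith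
    rw [this, hz]
    push_cast
    rw [← hnum]
    ring
  have hzbounds : ∀ j, 0 ≤ z j ∧ z j ≤ d := by
    intro j
    constructor
    · have : (0:ℝ) ≤ (z j : ℝ) := by
        rw [hzval j]
        exact mul_nonneg (by positivity) (Ttail_nonneg hdig j)
      exact_mod_cast this
    · have : (z j : ℝ) ≤ (d:ℝ) := by
        rw [hzval j]
        have hd1 : (0:ℝ) ≤ (d:ℝ) := by positivity
        nlinarith [Ttail_le_one hb hdig (x := x) j]
      exact_mod_cast this
  set f : Fin (d+2) → Fin (d+1) := fun j => ⟨(z j).toNat, by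
    have := hzbounds j
    omega⟩ with hf
  obtain ⟨a, a', hne, hfeq⟩ := Fintype.exists_ne_map_eq_of_card_lt f (by simp)
  have hzeq : z a = z a' := by
    have := congrArg Fin.val hfeq
    simp only [hf] at this
    have h1 := hzbounds (a : ℕ); have h2 := hzbounds (a' : ℕ)
    omega
  have hTeq : Ttail b x a = Ttail b x a' := by
    have : (d:ℝ) * Ttail b x a = (d:ℝ) * Ttail b x a' := by
      rw [← hzval, ← hzval, hzeq]
    have hd0 : (d:ℝ) ≠ 0 := by positivity
    exact mul_left_cancel₀ hd0 this
  -- wlog a < a'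
  have main : ∀ j1 j2 : ℕ, j1 < j2 → Ttail b x j1 = Ttail b x j2 → False := by
    intro j1 j2 hlt hT
    have H : ∀ i, Ttail b x (j1 + i) = Ttail b x (j2 + i) := by
      intro i
      induction i with
      | zero => simpa using hT
      | succ i ih =>
          have := (Ttail_step hb hdig hnp ih).2
          rw [show j1 + i + 1 = j1 + (i+1) by omega, show j2 + i + 1 = j2 + (i+1) by omega] at this
          exact this
    refine hnp ⟨j2 - j1, by omega, j1, fun n hn => ?_⟩
    have := (Ttail_step hb hdig hnp (H (n - j1))).1
    rw [show j1 + (n - j1) = n by omega] at this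
    rw [show j2 + (n - j1) = n + (j2 - j1) by omega] at this
    exact this.symm
  rcases Ne.lt_or_gt (Fin.val_ne_iff.mpr hne) with h | h
  · exact main _ _ h hTeq
  · exact main _ _ h hTeq.symm

lemma rc_mem (hb : 2 ≤ b) (hdig : ∀ k, x k < b) (n : ℕ) :
    ∃ j, j + n < rc n x ∧ ∀ t < n, x (j + t) = x (rc n x - n + t) := by
  have hne : {m | ∃ j, j + n < m ∧ ∀ t < n, x (j + t) = x (m - n + t)}.Nonempty := by
    set f : Fin (b^n + 1) → (Fin n → Fin b) := fun k t => ⟨x ((k:ℕ) + (t:ℕ)), hdig _⟩ with hf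
    obtain ⟨a, c, hne, hfeq⟩ := Fintype.exists_ne_map_eq_of_card_lt f (by
      simp [Fintype.card_fun])
    have key : ∀ (a c : Fin (b^n+1)), (a:ℕ) < (c:ℕ) → f a = f c →
        ∃ m, ∃ j, j + n < m ∧ ∀ t < n, x (j + t) = x (m - n + t) := by
      intro a c hac hfeq
      refine ⟨(c:ℕ) + n, (a:ℕ), by omega, fun t ht => ?_⟩
      have := congrFun hfeq ⟨t, ht⟩
      simp only [hf, Fin.mk.injEq] at this
      rw [show (c:ℕ) + n - n = (c:ℕ) by omega]
      exact this
    rcases Ne.lt_or_gt (Fin.val_ne_iff.mpr hne) with h | h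
    · obtain ⟨m, hm⟩ := key a c h hfeq
      exact ⟨m, hm⟩
    · obtain ⟨m, hm⟩ := key c a h hfeq.symm
      exact ⟨m, hm⟩
  exact Nat.sInf_mem hne


lemma approx (hb : 2 ≤ b) (hdig : ∀ k, x k < b) (μ : ℝ) (hμ : 1 < μ) (n : ℕ) (hn : 1 ≤ n)
    (hlt : (rc n x : ℝ) / n < μ / (μ - 1)) :
    ∃ q : ℚ, |Ttail b x 0 - q| < 1 / (q.den : ℝ) ^ μ ∧
      |Ttail b x 0 - q| ≤ ((b:ℝ)^n)⁻¹ := by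
  have hb0 : (0:ℝ) < b := by positivity
  set m := rc n x with hm
  obtain ⟨j, hjn, heq⟩ := rc_mem hb hdig n
  have hjmn : j < m - n := by omega
  have hnm : n ≤ m := by omega
  -- tail difference bound
  have Tdiff : |Ttail b x (m - n) - Ttail b x j| ≤ ((b:ℝ)^n)⁻¹ := by
    set g : ℕ → ℝ := fun i => if i < n then 0 else ((b:ℝ)-1) / (b:ℝ)^(i+1) with hg
    have hgs : Summable g := by
      refine Summable.of_nonneg_of_le (fun i => ?_) (fun i => ?_)
        ((geom_summable hb).mul_left ((b:ℝ)-1))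
      · simp only [hg]; split
        · exact le_rfl
        · exact div_nonneg (by nlinarith [@hb1 b hb]) (by positivity)
      · simp only [hg]; split
        · exact mul_nonneg (by nlinarith [@hb1 b hb]) (by positivity)
        · rw [div_eq_mul_inv]
    have hgval : ∑' i, g i = ((b:ℝ)^n)⁻¹ := by
      have hsplit := Summable.sum_add_tsum_nat_add n hgs
      have h1 : ∑ i ∈ Finset.range n, g i = 0 := by
        apply Finset.sum_eq_zero
        intro i hi
        simp [hg, Finset.mem_range.mp hi]
      have h2 : ∀ i : ℕ, g (i + n) = ((b:ℝ)-1) * ((b:ℝ)^n)⁻¹ * ((b:ℝ)^(i+1))⁻¹ := by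
        intro i
        simp only [hg, if_neg (by omega : ¬ (i + n < n))]
        rw [div_eq_mul_inv, show i + n + 1 = n + (i+1) by omega, pow_add, mul_inv, ← mul_assoc]
      rw [h1, zero_add] at hsplit
      rw [← hsplit, tsum_congr h2]
      rw [tsum_mul_left, geom_val hb]
      have hbne : (b:ℝ) - 1 ≠ 0 := by nlinarith [@hb1 b hb]
      field_simp
    have hdiff : Ttail b x (m-n) - Ttail b x j
        = ∑' i, ((x (m - n + i) : ℝ) / (b:ℝ)^(i+1) - (x (j + i) : ℝ) / (b:ℝ)^(i+1)) := by
      rw [Summable.tsum_sub (tail_summable hb hdig (m-n)) (tail_summable hb hdig j)]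
      rfl
    rw [hdiff, ← Real.norm_eq_abs]
    refine tsum_of_norm_bounded (hgval ▸ hgs.hasSum) fun i => ?_
    rw [Real.norm_eq_abs]
    simp only [hg]
    by_cases hi : i < n
    · rw [if_pos hi, heq i hi, ← hm, sub_self, abs_zero]
    · rw [if_neg hi, div_sub_div_same, abs_div, abs_of_pos (by positivity : (0:ℝ) < (b:ℝ)^(i+1))]
      apply div_le_div_of_nonneg_right ?_ (by positivity)
      rw [abs_sub_le_iff]
      constructor
      · have h1 := digle hdig (m - n + i)
        have h2 : (0:ℝ) ≤ (x (j+i) : ℝ) := by positivity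
        linarith
      · have h1 := digle hdig (j + i)
        have h2 : (0:ℝ) ≤ (x (m - n + i) : ℝ) := by positivity
        linarith
  -- rational approximation
  set Q : ℕ := b^(m-n) - b^j with hQ
  set P : ℤ := (Npre b x (m-n) : ℤ) - (Npre b x j : ℤ) with hP
  have hpowlt : b^j < b^(m-n) := Nat.pow_lt_pow_right (by omega) hjmn
  have hQ1 : 1 ≤ Q := by omega
  have hQcast : (Q:ℝ) = (b:ℝ)^(m-n) - (b:ℝ)^j := by
    rw [hQ]; push_cast [Nat.cast_sub hpowlt.le]; ring
  have hQpos : (0:ℝ) < Q := by exact_mod_cast hQ1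
  have hQlt : (Q:ℝ) < (b:ℝ)^(m-n) := by
    rw [hQcast]; nlinarith [pow_pos hb0 j]
  have hxi1 := pow_mul_xi (x := x) hb hdig (m-n)
  have hxi2 := pow_mul_xi (x := x) hb hdig j
  have hkey : (Q:ℝ) * Ttail b x 0 - (P:ℝ) = Ttail b x (m-n) - Ttail b x j := by
    rw [hQcast, hP]
    push_cast
    nlinarith [hxi1, hxi2]
  set q : ℚ := (P : ℚ) / (Q : ℚ) with hq
  have hqcast : (q:ℝ) = (P:ℝ) / (Q:ℝ) := by push_cast [hq]; ring
  have hden_dvd : ((q.den : ℤ)) ∣ (Q : ℤ) := by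
    have h := Rat.den_dvd P (Q:ℤ)
    rw [Rat.divInt_eq_div] at h
    push_cast at h
    rwa [← hq] at h
  have hden_le : (q.den : ℝ) ≤ (Q:ℝ) := by
    have := Int.le_of_dvd (by exact_mod_cast hQ1) hden_dvd
    exact_mod_cast this
  have hden_pos : (0:ℝ) < (q.den:ℝ) := by exact_mod_cast q.pos
  have herr : |Ttail b x 0 - (q:ℝ)| ≤ ((b:ℝ)^n)⁻¹ / (Q:ℝ) := by
    have : Ttail b x 0 - (q:ℝ) = ((Q:ℝ) * Ttail b x 0 - (P:ℝ)) / (Q:ℝ) := by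
      rw [hqcast]; field_simp
    rw [this, abs_div, abs_of_pos hQpos, hkey]
    gcongr
  -- exponent inequality
  have hμ1 : (0:ℝ) < μ - 1 := by linarith
  have hn0 : (0:ℝ) < (n:ℝ) := by exact_mod_cast hn
  have hmn_real : ((m - n : ℕ) : ℝ) = (m:ℝ) - (n:ℝ) := by
    push_cast [Nat.cast_sub hnm]; ring
  have hexp : ((m - n : ℕ) : ℝ) * (μ - 1) < (n:ℝ) := by
    rw [hmn_real]
    have h1 : (m:ℝ) * (μ - 1) < (n:ℝ) * μ := by
      rw [div_lt_div_iff₀ hn0 (by linarith : (0:ℝ) < μ - 1)] at hlt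
      linarith
    nlinarith [h1]
  have hrpow : (Q:ℝ) ^ (μ - 1) < (b:ℝ)^n := by
    have h1 : (Q:ℝ) ^ (μ - 1) < ((b:ℝ)^(m-n)) ^ (μ - 1) :=
      Real.rpow_lt_rpow hQpos.le hQlt hμ1
    have h2 : ((b:ℝ)^(m-n) : ℝ) ^ (μ - 1) = (b:ℝ) ^ (((m-n:ℕ):ℝ) * (μ - 1)) := by
      rw [← Real.rpow_natCast (b:ℝ) (m-n), ← Real.rpow_mul hb0.le]
    have h3 : (b:ℝ) ^ (((m-n:ℕ):ℝ) * (μ - 1)) < (b:ℝ) ^ ((n:ℕ):ℝ) :=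
      Real.rpow_lt_rpow_of_exponent_lt (@hb1 b hb) hexp
    rw [Real.rpow_natCast] at h3
    calc (Q:ℝ) ^ (μ - 1) < ((b:ℝ)^(m-n)) ^ (μ - 1) := h1
    _ = _ := h2
    _ < _ := h3
  have hdenpow : ((q.den : ℝ)) ^ μ < (b:ℝ)^n * (Q:ℝ) := by
    have h1 : ((q.den : ℝ)) ^ μ ≤ (Q:ℝ) ^ μ :=
      Real.rpow_le_rpow hden_pos.le hden_le (by linarith)
    have h2 : (Q:ℝ) ^ μ = (Q:ℝ) * (Q:ℝ) ^ (μ - 1) := by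
      rw [show μ = 1 + (μ - 1) by ring, Real.rpow_add hQpos, Real.rpow_one]
      ring_nf
    calc ((q.den : ℝ)) ^ μ ≤ (Q:ℝ) ^ μ := h1
    _ = (Q:ℝ) * (Q:ℝ) ^ (μ - 1) := h2
    _ < (Q:ℝ) * (b:ℝ)^n := by
        apply mul_lt_mul_of_pos_left hrpow hQpos
    _ = (b:ℝ)^n * (Q:ℝ) := by ring
  refine ⟨q, ?_, ?_⟩
  · calc |Ttail b x 0 - (q:ℝ)| ≤ ((b:ℝ)^n)⁻¹ / (Q:ℝ) := herr
    _ = ((b:ℝ)^n * (Q:ℝ))⁻¹ := by rw [div_eq_mul_inv, ← mul_inv]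
    _ < 1 / ((q.den : ℝ)) ^ μ := by
        rw [lt_div_iff₀ (by positivity : (0:ℝ) < (q.den:ℝ)^μ), inv_mul_eq_div,
          div_lt_one (by positivity)]
        exact hdenpow
  · calc |Ttail b x 0 - (q:ℝ)| ≤ ((b:ℝ)^n)⁻¹ / (Q:ℝ) := herr
    _ ≤ ((b:ℝ)^n)⁻¹ / 1 := by
        apply div_le_div_of_nonneg_left (by positivity) one_pos ?_ -- maybe wrong
        exact_mod_cast hQ1
    _ = ((b:ℝ)^n)⁻¹ := div_one _

lemma key_infinite (hb : 2 ≤ b) (hdig : ∀ k, x k < b) (hnp : ¬ EventuallyPeriodic x)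
    (μ : ℝ) (hμ : 1 < μ) (hrep : repExp x < ((μ / (μ - 1) : ℝ) : EReal)) :
    {q : ℚ | |Ttail b x 0 - (q:ℝ)| < 1 / (q.den : ℝ) ^ μ}.Infinite := by
  have hb0 : (0:ℝ) < b := by positivity
  have hfreq : ∃ᶠ n in atTop, (((rc n x : ℝ) / (n : ℝ) : ℝ) : EReal) < ((μ / (μ - 1) : ℝ) : EReal) :=
    frequently_lt_of_liminf_lt (by isBoundedDefault) hrep
  by_contra hfin
  rw [Set.not_infinite] at hfin
  -- obtain a positive lower bound for |ξ - q| over the finite set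
  set T := {q : ℚ | |Ttail b x 0 - (q:ℝ)| < 1 / (q.den : ℝ) ^ μ} with hT
  have hε : ∃ ε : ℝ, 0 < ε ∧ ∀ q ∈ T, ε ≤ |Ttail b x 0 - (q:ℝ)| := by
    rcases Set.eq_empty_or_nonempty T with hTe | hTne
    · exact ⟨1, one_pos, fun q hq => by rw [hTe] at hq; exact absurd hq (Set.notMem_empty q)⟩
    · have hne : hfin.toFinset.Nonempty := by
        rwa [Set.Finite.toFinset_nonempty]
      obtain ⟨q0, hq0mem, hq0min⟩ := Finset.exists_min_image hfin.toFinset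
        (fun q => |Ttail b x 0 - (q:ℝ)|) hne
      refine ⟨|Ttail b x 0 - (q0:ℝ)|, ?_, fun q hq => hq0min q (hfin.mem_toFinset.mpr hq)⟩
      rw [abs_pos, sub_ne_zero]
      exact xi_irrational hb hdig hnp q0
  obtain ⟨ε, hεpos, hεle⟩ := hε
  obtain ⟨N₀, hN₀⟩ := exists_pow_lt_of_lt_one hεpos (hbinv hb)
  obtain ⟨n, hnge, hnlt⟩ := (frequently_atTop.mp hfreq) (max N₀ 1)
  have hn1 : 1 ≤ n := le_trans (le_max_right _ _) hnge
  have hnN₀ : N₀ ≤ n := le_trans (le_max_left _ _) hnge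
  have hlt' : (rc n x : ℝ) / n < μ / (μ - 1) := by exact_mod_cast hnlt
  obtain ⟨q, hq1, hq2⟩ := approx hb hdig μ hμ n hn1 hlt'
  have hqT : q ∈ T := hq1
  have : ε ≤ |Ttail b x 0 - (q:ℝ)| := hεle q hqT
  have hchain : |Ttail b x 0 - (q:ℝ)| < ε := by
    calc |Ttail b x 0 - (q:ℝ)| ≤ ((b:ℝ)^n)⁻¹ := hq2
    _ ≤ ((b:ℝ)^N₀)⁻¹ := by
        apply inv_anti₀ (by positivity)
        exact pow_le_pow_right₀ (by linarith [@hb1 b hb]) hnN₀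
    _ = ((b:ℝ)⁻¹)^N₀ := by rw [inv_pow]
    _ < ε := hN₀
  linarith

end aux

theorem irrExp_ge_of_repExp (b : ℕ) (hb : 2 ≤ b) (x : ℕ → ℕ) (hdig : ∀ k, x k < b)
    (hnp : ¬ EventuallyPeriodic x) :
    (repExp x = 1 → irrExp (∑' k : ℕ, (x k : ℝ) / (b : ℝ) ^ (k + 1)) = ⊤) ∧
    (1 < repExp x → repExp x < ⊤ →
      (((repExp x).toReal / ((repExp x).toReal - 1) : ℝ) : EReal) ≤
        irrExp (∑' k : ℕ, (x k : ℝ) / (b : ℝ) ^ (k + 1))) := by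
  have hXi : (∑' k : ℕ, (x k : ℝ) / (b : ℝ) ^ (k + 1)) = Ttail b x 0 :=
    tsum_congr fun k => by rw [zero_add]
  rw [hXi]
  have hmem : ∀ μ : ℝ, 1 < μ → repExp x < ((μ / (μ - 1) : ℝ) : EReal) →
      ((μ : ℝ) : EReal) ≤ irrExp (Ttail b x 0) := by
    intro μ hμ hrep
    exact le_sSup ⟨μ, key_infinite hb hdig hnp μ hμ hrep, rfl⟩
  constructor
  · intro hrep1
    by_contra hne
    have hlt : irrExp (Ttail b x 0) < ⊤ := lt_top_iff_ne_top.mpr hne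
    obtain ⟨r, hr1, _⟩ := EReal.exists_between_coe_real hlt
    set μ : ℝ := max r 2 with hμdef
    have hμ1 : 1 < μ := lt_of_lt_of_le one_lt_two (le_max_right _ _)
    have hdivgt : (1:ℝ) < μ / (μ - 1) := by
      rw [one_lt_div (by linarith)]; linarith
    have hrepμ : repExp x < ((μ / (μ - 1) : ℝ) : EReal) := by
      rw [hrep1, show (1 : EReal) = ((1:ℝ) : EReal) from rfl]
      exact_mod_cast hdivgt
    have h1 := hmem μ hμ1 hrepμ
    have h2 : ((r:ℝ) : EReal) ≤ ((μ:ℝ) : EReal) := by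
      exact_mod_cast le_max_left r 2
    exact absurd (lt_of_le_of_lt (h2.trans h1) hr1) (lt_irrefl _)
  · intro hgt htop
    have hbot : repExp x ≠ ⊥ := fun h => by rw [h] at hgt; exact absurd hgt (by simp)
    have hRcoe : (((repExp x).toReal : ℝ) : EReal) = repExp x :=
      EReal.coe_toReal (ne_of_lt htop) hbot
    set R : ℝ := (repExp x).toReal with hRdef
    have hR1 : 1 < R := by
      rw [show (1 : EReal) = ((1:ℝ) : EReal) from rfl, ← hRcoe] at hgt
      exact_mod_cast hgt
    by_contra hcon
    push_neg at hcon
    have h1 : (1:ℝ) < R / (R - 1) := by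
      rw [one_lt_div (by linarith)]; linarith
    have hmax : max (irrExp (Ttail b x 0)) ((1:ℝ) : EReal) < ((R / (R - 1) : ℝ) : EReal) := by
      apply max_lt hcon
      exact_mod_cast h1
    obtain ⟨μ, hμ1, hμ2⟩ := EReal.exists_between_coe_real hmax
    have hμgt1 : 1 < μ := by
      have := lt_of_le_of_lt (le_max_right (irrExp (Ttail b x 0)) ((1:ℝ) : EReal)) hμ1
      exact_mod_cast this
    have hμirr : irrExp (Ttail b x 0) < ((μ:ℝ) : EReal) :=
      lt_of_le_of_lt (le_max_left _ _) hμ1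
    have hμR : μ < R / (R - 1) := by exact_mod_cast hμ2
    have hrepμ : repExp x < ((μ / (μ - 1) : ℝ) : EReal) := by
      rw [← hRcoe]
      have : R < μ / (μ - 1) := by
        rw [lt_div_iff₀ (by linarith : (0:ℝ) < μ - 1)]
        rw [lt_div_iff₀ (by linarith : (0:ℝ) < R - 1)] at hμR
        nlinarith
      exact_mod_cast this
    exact absurd (lt_of_le_of_lt (hmem μ hμgt1 hrepμ) hμirr) (lt_irrefl _)
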